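/- There exists a constant c(n,H) depending only on n and H > 1 such that for all μ > 0 and all φ ∈ (0, π/2) satisfying the hyperbolic Delaunay constraint (i.e., lying in the range of the profile angle of D_H(μ)), one has (n(H²-1) + n(n-1) μ² (tan φ)^(-2n)) · tan² φ ≤ c(n,H). -/
import Mathlib


/-- There is a constant `c(n,H)` depending only on `n ≥ 2` and `H > 1` such
that for all `μ > 0` and all `t = tan φ > 0` satisfying the hyperbolic Delaunay constraint
`H t^n + μ ≤ t^(n-1) √(1+t²)`, one has
`(n(H²-1) + n(n-1) μ² t^(-2n)) · t² ≤ c(n,H)`. -/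
theorem hyperbolic_delaunay_potential_bound (n : ℕ) (hn : 2 ≤ n) (H : ℝ) (hH : 1 < H) :
    ∃ c : ℝ, ∀ μ : ℝ, 0 < μ → ∀ t : ℝ, 0 < t →
      H * t ^ n + μ ≤ t ^ (n - 1) * Real.sqrt (1 + t ^ 2) →
      ((n : ℝ) * (H ^ 2 - 1) + (n : ℝ) * ((n : ℝ) - 1) * μ ^ 2 / t ^ (2 * n)) * t ^ 2 ≤ c := by
  refine ⟨(n : ℝ) + (n : ℝ) * ((n : ℝ) - 1) * (1 + 1 / (H ^ 2 - 1)), ?_⟩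
  intro μ hμ t ht hcon
  have hH1 : (0:ℝ) < H ^ 2 - 1 := by nlinarith
  set s := Real.sqrt (1 + t ^ 2) with hsdef
  have hs : s ^ 2 = 1 + t ^ 2 := Real.sq_sqrt (by positivity)
  have hs0 : 0 ≤ s := Real.sqrt_nonneg _
  have htn1 : 0 < t ^ (n - 1) := pow_pos ht _
  have hpow : t ^ n = t ^ (n - 1) * t := by
    rw [← pow_succ]; congr 1; omega
  have hHt : H * t ≤ s := by
    have h1 : t ^ (n - 1) * (H * t) ≤ t ^ (n - 1) * s := by rw [hpow] at hcon; nlinarith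
    exact le_of_mul_le_mul_left h1 htn1
  have ht2 : t ^ 2 ≤ 1 / (H ^ 2 - 1) := by
    rw [le_div_iff₀ hH1]
    nlinarith [mul_self_le_mul_self (by positivity : (0:ℝ) ≤ H * t) hHt, hs]
  have hμle : μ ≤ t ^ (n - 1) * s := by nlinarith [pow_pos ht n]
  have hμ2 : μ ^ 2 ≤ (t ^ (n - 1)) ^ 2 * (1 + t ^ 2) := by nlinarith
  have htpow : (t ^ (n - 1)) ^ 2 * t ^ 2 = t ^ (2 * n) := by
    rw [← pow_mul, ← pow_add]; congr 1; omega
  have ht2n : (0:ℝ) < t ^ (2 * n) := pow_pos ht _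
  have hn1 : (0:ℝ) ≤ (n : ℝ) * ((n : ℝ) - 1) := by
    have : (2:ℝ) ≤ n := by exact_mod_cast hn
    nlinarith
  have key : μ ^ 2 / t ^ (2 * n) * t ^ 2 ≤ 1 + 1 / (H ^ 2 - 1) := by
    rw [div_mul_eq_mul_div, div_le_iff₀ ht2n]
    calc μ ^ 2 * t ^ 2 ≤ ((t ^ (n - 1)) ^ 2 * (1 + t ^ 2)) * t ^ 2 := by nlinarith
      _ = (1 + t ^ 2) * t ^ (2 * n) := by rw [← htpow]; ring
      _ ≤ (1 + 1 / (H ^ 2 - 1)) * t ^ (2 * n) := by nlinarith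
  have h1 : (n : ℝ) * (H ^ 2 - 1) * t ^ 2 ≤ (n : ℝ) := by
    have hn0 : (0:ℝ) ≤ (n : ℝ) := Nat.cast_nonneg n
    have := mul_le_mul_of_nonneg_left ht2 (mul_nonneg hn0 hH1.le)
    calc (n : ℝ) * (H ^ 2 - 1) * t ^ 2 ≤ (n : ℝ) * (H ^ 2 - 1) * (1 / (H ^ 2 - 1)) := this
      _ = (n : ℝ) := by field_simp
  have h2 : (n : ℝ) * ((n : ℝ) - 1) * μ ^ 2 / t ^ (2 * n) * t ^ 2
      ≤ (n : ℝ) * ((n : ℝ) - 1) * (1 + 1 / (H ^ 2 - 1)) := by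
    have : (n : ℝ) * ((n : ℝ) - 1) * μ ^ 2 / t ^ (2 * n) * t ^ 2
        = (n : ℝ) * ((n : ℝ) - 1) * (μ ^ 2 / t ^ (2 * n) * t ^ 2) := by ring
    rw [this]
    exact mul_le_mul_of_nonneg_left key hn1
  nlinarith [h1, h2]
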